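/- If C is cocomplete and T is a monad on C that preserves reflexive coequalizers, then the category Alg T of T-algebras is cocomplete (has all small colimits). -/

import Mathlib

open CategoryTheory CategoryTheory.Limits

universe v₁ u₁

section Aux

variable {C : Type u₁} [Category.{v₁} C] [HasColimits C] (T : Monad C)

/-- If `T` preserves reflexive coequalizers, the forgetful functor from `T`-algebras
creates the coequalizer of any reflexive pair of algebra morphisms; in particular it exists. -/
lemma algebra_hasReflexiveCoequalizers
    (hT : ∀ ⦃X Y : C⦄ (p q : X ⟶ Y), IsReflexivePair p q →
      Nonempty (PreservesColimit (parallelPair p q) (T : C ⥤ C))) :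
    HasReflexiveCoequalizers (Monad.Algebra T) := by
  constructor
  intro A B f g hfg
  obtain ⟨s, hs1, hs2⟩ := hfg.common_section
  have h1 : IsReflexivePair f.f g.f :=
    IsReflexivePair.mk' s.f
      (by rw [← Monad.Algebra.comp_f, hs1]; rfl)
      (by rw [← Monad.Algebra.comp_f, hs2]; rfl)
  have h2 : IsReflexivePair ((T : C ⥤ C).map f.f) ((T : C ⥤ C).map g.f) :=
    IsReflexivePair.mk' ((T : C ⥤ C).map s.f)
      (by
        rw [← Functor.map_comp]
        have : s.f ≫ f.f = 𝟙 _ := by rw [← Monad.Algebra.comp_f, hs1]; rfl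
        rw [this]; exact (T : C ⥤ C).map_id _)
      (by
        rw [← Functor.map_comp]
        have : s.f ≫ g.f = 𝟙 _ := by rw [← Monad.Algebra.comp_f, hs2]; rfl
        rw [this]; exact (T : C ⥤ C).map_id _)
  haveI i1 : PreservesColimit (parallelPair f g ⋙ Monad.forget T) (T : C ⥤ C) := by
    haveI := (hT f.f g.f h1).some
    exact preservesColimit_of_iso_diagram (K₁ := parallelPair f.f g.f) (T : C ⥤ C)
      (diagramIsoParallelPair (parallelPair f g ⋙ Monad.forget T)).symm
  haveI i2 : PreservesColimit ((parallelPair f g ⋙ Monad.forget T) ⋙ (T : C ⥤ C))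
      (T : C ⥤ C) := by
    haveI := (hT ((T : C ⥤ C).map f.f) ((T : C ⥤ C).map g.f) h2).some
    exact preservesColimit_of_iso_diagram (K₁ := parallelPair ((T : C ⥤ C).map f.f) ((T : C ⥤ C).map g.f)) (T : C ⥤ C)
      (diagramIsoParallelPair ((parallelPair f g ⋙ Monad.forget T) ⋙ (T : C ⥤ C))).symm
  exact hasColimit_of_created (parallelPair f g) (Monad.forget T)

end Aux

/-- If `C` is cocomplete and `T` is a monad on `C` preserving reflexive
coequalizers, then the category of `T`-algebras is cocomplete. -/
theorem algebra_cocomplete_of_preserves_reflexive_coequalizers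
    {C : Type u₁} [Category.{v₁} C] [HasColimits C] (T : Monad C)
    (hT : ∀ ⦃X Y : C⦄ (p q : X ⟶ Y), IsReflexivePair p q →
      Nonempty (PreservesColimit (parallelPair p q) (T : C ⥤ C))) :
    HasColimits (Monad.Algebra T) := by
  haveI hRefl : HasReflexiveCoequalizers (Monad.Algebra T) :=
    algebra_hasReflexiveCoequalizers T hT
  constructor
  intro J _
  rw [hasColimitsOfShape_iff_isRightAdjoint_const]
  -- The vertical monadic functor: postcomposition with the forgetful functor.
  let V : (J ⥤ Monad.Algebra T) ⥤ (J ⥤ C) :=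
    (Functor.whiskeringRight J (Monad.Algebra T) C).obj (Monad.forget T)
  let adjV : (Functor.whiskeringRight J C (Monad.Algebra T)).obj T.free ⊣ V :=
    Adjunction.whiskerRight J T.adj
  haveI : V.IsRightAdjoint := adjV.isRightAdjoint
  -- pointwise colimits of reflexive pairs in `J ⥤ Monad.Algebra T`
  have ptwise : ∀ {X Y : J ⥤ Monad.Algebra T} (α β : X ⟶ Y), IsReflexivePair α β →
      ∀ j, HasColimit ((parallelPair α β).flip.obj j) := by
    intro X Y α β hαβ j
    obtain ⟨σ, hσ1, hσ2⟩ := hαβ.common_section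
    haveI h1 : IsReflexivePair (α.app j) (β.app j) :=
      IsReflexivePair.mk' (σ.app j)
        (by rw [← NatTrans.comp_app, hσ1]; rfl)
        (by rw [← NatTrans.comp_app, hσ2]; rfl)
    haveI : HasColimit (parallelPair (α.app j) (β.app j)) :=
      HasReflexiveCoequalizers.has_coeq _ _
    exact hasColimit_of_iso (F := parallelPair (α.app j) (β.app j))
      (diagramIsoParallelPair ((parallelPair α β).flip.obj j))
  haveI hRC : HasReflexiveCoequalizers (J ⥤ Monad.Algebra T) := by
    constructor
    intro X Y α β hαβ
    haveI := ptwise α β hαβ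
    infer_instance
  -- `V` preserves reflexive coequalizers.
  haveI : Monad.PreservesColimitOfIsReflexivePair V := by
    constructor
    intro X Y α β hαβ
    haveI := ptwise α β hαβ
    apply preservesColimit_of_evaluation
    intro k
    haveI iEv : PreservesColimit (parallelPair α β)
        ((evaluation J (Monad.Algebra T)).obj k) := inferInstance
    haveI iForget : PreservesColimit
        (parallelPair α β ⋙ (evaluation J (Monad.Algebra T)).obj k) (Monad.forget T) := by
      obtain ⟨σ, hσ1, hσ2⟩ := hαβ.common_section
      haveI h1 : IsReflexivePair (α.app k) (β.app k) :=
        IsReflexivePair.mk' (σ.app k)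
          (by rw [← NatTrans.comp_app, hσ1]; rfl)
          (by rw [← NatTrans.comp_app, hσ2]; rfl)
      obtain ⟨s, hs1, hs2⟩ := h1.common_section
      have h2 : IsReflexivePair ((α.app k).f) ((β.app k).f) :=
        IsReflexivePair.mk' s.f
          (by rw [← Monad.Algebra.comp_f, hs1]; rfl)
          (by rw [← Monad.Algebra.comp_f, hs2]; rfl)
      have h3 : IsReflexivePair ((T : C ⥤ C).map (α.app k).f)
          ((T : C ⥤ C).map (β.app k).f) :=
        IsReflexivePair.mk' ((T : C ⥤ C).map s.f)
          (by
            rw [← Functor.map_comp]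
            have : s.f ≫ (α.app k).f = 𝟙 _ := by rw [← Monad.Algebra.comp_f, hs1]; rfl
            rw [this]; exact (T : C ⥤ C).map_id _)
          (by
            rw [← Functor.map_comp]
            have : s.f ≫ (β.app k).f = 𝟙 _ := by rw [← Monad.Algebra.comp_f, hs2]; rfl
            rw [this]; exact (T : C ⥤ C).map_id _)
      haveI i1 : PreservesColimit
          (parallelPair (α.app k) (β.app k) ⋙ Monad.forget T) (T : C ⥤ C) := by
        haveI := (hT (α.app k).f (β.app k).f h2).some
        exact preservesColimit_of_iso_diagram (K₁ := parallelPair (α.app k).f (β.app k).f)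
          (T : C ⥤ C)
          (diagramIsoParallelPair (parallelPair (α.app k) (β.app k) ⋙ Monad.forget T)).symm
      haveI i2 : PreservesColimit
          ((parallelPair (α.app k) (β.app k) ⋙ Monad.forget T) ⋙ (T : C ⥤ C))
          (T : C ⥤ C) := by
        haveI := (hT ((T : C ⥤ C).map (α.app k).f) ((T : C ⥤ C).map (β.app k).f) h3).some
        exact preservesColimit_of_iso_diagram
          (K₁ := parallelPair ((T : C ⥤ C).map (α.app k).f) ((T : C ⥤ C).map (β.app k).f))
          (T : C ⥤ C)
          (diagramIsoParallelPair
            ((parallelPair (α.app k) (β.app k) ⋙ Monad.forget T) ⋙ (T : C ⥤ C))).symm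
      haveI : PreservesColimit (parallelPair (α.app k) (β.app k)) (Monad.forget T) :=
        inferInstance
      exact preservesColimit_of_iso_diagram (K₁ := parallelPair (α.app k) (β.app k))
        (Monad.forget T)
        (diagramIsoParallelPair
          (parallelPair α β ⋙ (evaluation J (Monad.Algebra T)).obj k)).symm
    haveI : PreservesColimit (parallelPair α β)
        ((evaluation J (Monad.Algebra T)).obj k ⋙ Monad.forget T) := inferInstance
    exact preservesColimit_of_natIso (parallelPair α β)
      (NatIso.ofComponents (fun X => Iso.refl _) (by intros; exact (Category.comp_id _).trans (Category.id_comp _).symm) :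
        (evaluation J (Monad.Algebra T)).obj k ⋙ Monad.forget T ≅
          V ⋙ (evaluation J C).obj k)
  -- `V` is monadic by the reflexive (crude) monadicity theorem.
  haveI : MonadicRightAdjoint V :=
    Monad.monadicOfHasPreservesReflexiveCoequalizersOfReflectsIsomorphisms adjV
  -- `const ⋙ V` has a left adjoint, since it is isomorphic to `forget ⋙ const`.
  haveI : ((Functor.const J : Monad.Algebra T ⥤ _) ⋙ V).IsRightAdjoint := by
    have adj2 : (colim : (J ⥤ C) ⥤ C) ⋙ T.free ⊣
        Monad.forget T ⋙ (Functor.const J : C ⥤ _) := colimConstAdj.comp T.adj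
    exact (adj2.ofNatIsoRight (Functor.compConstIso J (Monad.forget T))).isRightAdjoint
  exact isRightAdjoint_triangle_lift_monadic V
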